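/- Let μ₁, λ > 0 and Λ = (Λ₁, Λ₂, Λ₃) ∈ ℝ³ with Λᵢ > 0 for each i. Let s, Λ̂ : [0,∞) → ℝ³ be differentiable and satisfy ⟨s(t), s′(t)⟩ = −μ₁ ‖s(t)‖² − Σᵢ Λ̂ᵢ(t) |sᵢ(t)| and Λ̂ᵢ′(t) = λ |sᵢ(t)| for each i and all t ≥ 0. Then s(t) → 0 as t → ∞. -/

import Mathlib

open scoped RealInnerProductSpace

private lemma exists_tendsto_of_monotoneOn_bdd {f : ℝ → ℝ} {B : ℝ}
    (hmono : MonotoneOn f (Set.Ici 0)) (hbdd : ∀ t ∈ Set.Ici (0:ℝ), f t ≤ B) :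
    ∃ l, Filter.Tendsto f Filter.atTop (nhds l) := by
  set g : ℝ → ℝ := fun t => f (max t 0) with hgdef
  have hg : Monotone g := fun a b hab =>
    hmono (le_max_right a 0) (le_max_right b 0) (max_le_max hab le_rfl)
  have hb : BddAbove (Set.range g) := by
    refine ⟨B, ?_⟩
    rintro x ⟨t, rfl⟩
    exact hbdd _ (le_max_right t 0)
  refine ⟨⨆ t, g t, (tendsto_atTop_ciSup hg hb).congr' ?_⟩
  filter_upwards [Filter.eventually_ge_atTop (0:ℝ)] with t ht
  simp [hgdef, max_eq_left ht]

private lemma exists_tendsto_of_antitoneOn_bdd {f : ℝ → ℝ} {B : ℝ}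
    (hanti : AntitoneOn f (Set.Ici 0)) (hbdd : ∀ t ∈ Set.Ici (0:ℝ), B ≤ f t) :
    ∃ l, Filter.Tendsto f Filter.atTop (nhds l) := by
  obtain ⟨l, hl⟩ := exists_tendsto_of_monotoneOn_bdd (f := fun t => -f t) (B := -B)
    (fun a ha b hb hab => neg_le_neg (hanti ha hb hab))
    (fun t ht => neg_le_neg (hbdd t ht))
  exact ⟨-l, by simpa using hl.neg⟩

/-- **Theorem 2 (convergence of the sliding variable).** Along the closed-loop sliding
dynamics `⟨s, s′⟩ = −μ₁‖s‖² − Σᵢ Λ̂ᵢ|sᵢ|` with adaptation law `Λ̂ᵢ′ = λ|sᵢ|`, the sliding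
variable satisfies `s(t) → 0` as `t → ∞`. -/
theorem qasmc_sliding_convergence (μ₁ lam : ℝ) (hμ₁ : 0 < μ₁) (hlam : 0 < lam)
    (Λ : EuclideanSpace ℝ (Fin 3)) (hΛ : ∀ i, 0 < Λ i)
    (s Λhat : ℝ → EuclideanSpace ℝ (Fin 3)) (s' Λhat' : ℝ → EuclideanSpace ℝ (Fin 3))
    (hs : ∀ t ∈ Set.Ici (0:ℝ), HasDerivWithinAt s (s' t) (Set.Ici 0) t)
    (hΛhat : ∀ t ∈ Set.Ici (0:ℝ), HasDerivWithinAt Λhat (Λhat' t) (Set.Ici 0) t)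
    (hclosed : ∀ t ∈ Set.Ici (0:ℝ),
      ⟪s t, s' t⟫ = -μ₁ * ‖s t‖ ^ 2 - ∑ i, Λhat t i * |s t i|)
    (hadapt : ∀ t ∈ Set.Ici (0:ℝ), ∀ i, Λhat' t i = lam * |s t i|) :
    Filter.Tendsto s Filter.atTop (nhds 0) := by
  -- coordinate derivatives of Λhat
  have hΛi : ∀ i, ∀ t ∈ Set.Ici (0:ℝ),
      HasDerivWithinAt (fun t => Λhat t i) (lam * |s t i|) (Set.Ici 0) t := by
    intro i t ht
    have := (EuclideanSpace.proj (𝕜 := ℝ) i).hasFDerivAt.comp_hasDerivWithinAt t (hΛhat t ht)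
    exact this.congr_deriv (by simp [hadapt t ht i])
  -- the Lyapunov function
  set Q : ℝ → ℝ := fun t => ∑ i, (Λhat t i - Λ i) ^ 2 with hQdef
  set L : ℝ → ℝ := fun t => (1/2) * ‖s t‖ ^ 2 + (1/(2*lam)) * Q t with hLdef
  set L' : ℝ → ℝ := fun t => -μ₁ * ‖s t‖ ^ 2 - ∑ i, Λ i * |s t i| with hL'def
  have hQderiv : ∀ t ∈ Set.Ici (0:ℝ),
      HasDerivWithinAt Q (∑ i, 2 * (Λhat t i - Λ i) * (lam * |s t i|)) (Set.Ici 0) t := by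
    intro t ht
    apply HasDerivWithinAt.fun_sum
    intro i _
    have h1 : HasDerivWithinAt (fun t => Λhat t i - Λ i) (lam * |s t i|) (Set.Ici 0) t :=
      (hΛi i t ht).sub_const _
    simpa [mul_comm, mul_assoc, mul_left_comm] using h1.fun_pow 2
  have hNderiv : ∀ t ∈ Set.Ici (0:ℝ),
      HasDerivWithinAt (fun t => ‖s t‖ ^ 2) (2 * ⟪s t, s' t⟫) (Set.Ici 0) t := by
    intro t ht
    have := (hs t ht).inner ℝ (hs t ht)
    simp only [real_inner_self_eq_norm_sq] at this
    refine this.congr_deriv ?_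
    rw [real_inner_comm (s' t) (s t)]; ring
  have hLderiv : ∀ t ∈ Set.Ici (0:ℝ), HasDerivWithinAt L (L' t) (Set.Ici 0) t := by
    intro t ht
    have := ((hNderiv t ht).const_mul (1/2)).add ((hQderiv t ht).const_mul (1/(2*lam)))
    refine this.congr_deriv ?_
    rw [hL'def]
    simp only
    rw [hclosed t ht]
    have hlam' : lam ≠ 0 := ne_of_gt hlam
    have key : ∀ i : Fin 3, (1/(2*lam)) * (2 * (Λhat t i - Λ i) * (lam * |s t i|))
        = Λhat t i * |s t i| - Λ i * |s t i| := by
      intro i; field_simp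
    rw [Finset.mul_sum, Finset.sum_congr rfl (fun i _ => key i), Finset.sum_sub_distrib]
    ring
  have hLnonneg : ∀ t, 0 ≤ L t := by
    intro t
    have h1 : (0:ℝ) ≤ Q t := Finset.sum_nonneg fun i _ => sq_nonneg _
    have h2 : (0:ℝ) ≤ 1/(2*lam) := by positivity
    have h3 : (0:ℝ) ≤ ‖s t‖ ^ 2 := by positivity
    simp only [hLdef]
    nlinarith
  have hL'nonpos : ∀ t ∈ Set.Ici (0:ℝ), L' t ≤ 0 := by
    intro t ht
    have h1 : 0 ≤ μ₁ * ‖s t‖ ^ 2 := by positivity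
    have h2 : 0 ≤ ∑ i, Λ i * |s t i| :=
      Finset.sum_nonneg fun i _ => mul_nonneg (hΛ i).le (abs_nonneg _)
    simp only [hL'def]
    linarith
  have hLanti : AntitoneOn L (Set.Ici 0) :=
    antitoneOn_of_hasDerivWithinAt_nonpos (convex_Ici 0)
      (fun t ht => (hLderiv t ht).continuousWithinAt)
      (fun t ht => ((hLderiv t (interior_subset ht)).mono interior_subset))
      (fun t ht => hL'nonpos t (interior_subset ht))
  have hΛmono : ∀ i, MonotoneOn (fun t => Λhat t i) (Set.Ici 0) := by
    intro i
    exact monotoneOn_of_hasDerivWithinAt_nonneg (convex_Ici 0)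
      (fun t ht => (hΛi i t ht).continuousWithinAt)
      (fun t ht => ((hΛi i t (interior_subset ht)).mono interior_subset))
      (fun t ht => by positivity)
  -- bound on Λhat
  have hΛbdd : ∀ i, ∀ t ∈ Set.Ici (0:ℝ), Λhat t i ≤ Λ i + Real.sqrt (2 * lam * L 0) := by
    intro i t ht
    have hQle : Q t ≤ 2 * lam * L 0 := by
      have h1 : L t ≤ L 0 := hLanti (le_refl (0:ℝ)) ht ht
      have h3 : (0:ℝ) ≤ ‖s t‖ ^ 2 := by positivity
      have h4 : (1/(2*lam)) * Q t ≤ L t := by simp only [hLdef]; nlinarith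
      have h5 : (0:ℝ) < 1/(2*lam) := by positivity
      calc Q t = 2 * lam * ((1/(2*lam)) * Q t) := by field_simp
        _ ≤ 2 * lam * L 0 :=
          mul_le_mul_of_nonneg_left (h4.trans h1) (by positivity)
    have hsq : (Λhat t i - Λ i) ^ 2 ≤ Q t := by
      simp only [hQdef]
      exact Finset.single_le_sum (f := fun j => (Λhat t j - Λ j) ^ 2)
        (fun j _ => sq_nonneg _) (Finset.mem_univ i)
    have habs : |Λhat t i - Λ i| ≤ Real.sqrt (2 * lam * L 0) := by
      rw [← Real.sqrt_sq_eq_abs]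
      exact Real.sqrt_le_sqrt (hsq.trans hQle)
    have := (abs_le.mp habs).2
    linarith
  -- each coordinate of Λhat converges
  have hconv : ∀ i, ∃ l, Filter.Tendsto (fun t => Λhat t i) Filter.atTop (nhds l) := fun i =>
    exists_tendsto_of_monotoneOn_bdd (hΛmono i) (hΛbdd i)
  choose lim hlim using hconv
  have hQtend : Filter.Tendsto Q Filter.atTop (nhds (∑ i, (lim i - Λ i) ^ 2)) := by
    simp only [hQdef]
    exact tendsto_finset_sum _ fun i _ => ((hlim i).sub tendsto_const_nhds).pow 2
  obtain ⟨ℓ, hℓ⟩ := exists_tendsto_of_antitoneOn_bdd hLanti (fun t _ => hLnonneg t)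
  have hNeq : ∀ t, ‖s t‖ ^ 2 = 2 * L t - (1/lam) * Q t := by
    intro t
    have hlam' : lam ≠ 0 := ne_of_gt hlam
    simp only [hLdef]
    field_simp
    ring
  set v : ℝ := ∑ i, (lim i - Λ i) ^ 2 with hvdef
  set ℓ₂ : ℝ := 2 * ℓ - (1/lam) * v with hℓ₂def
  have hNtend : Filter.Tendsto (fun t => ‖s t‖ ^ 2) Filter.atTop (nhds ℓ₂) := by
    simp only [hNeq]
    exact (hℓ.const_mul 2).sub (hQtend.const_mul (1/lam))
  have hℓ₂nonneg : 0 ≤ ℓ₂ := ge_of_tendsto' hNtend fun t => by positivity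
  rcases eq_or_lt_of_le hℓ₂nonneg with h0 | h0
  · -- ℓ₂ = 0 : s tends to 0
    rw [← h0] at hNtend
    have h1 : Filter.Tendsto (fun t => Real.sqrt (‖s t‖ ^ 2)) Filter.atTop
        (nhds (Real.sqrt 0)) := (Real.continuous_sqrt.continuousAt).tendsto.comp hNtend
    have h2 : Filter.Tendsto (fun t => ‖s t‖) Filter.atTop (nhds 0) := by
      simpa [Real.sqrt_sq (norm_nonneg _)] using h1
    exact tendsto_zero_iff_norm_tendsto_zero.mpr h2
  · -- ℓ₂ > 0 : contradiction
    exfalso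
    have hev : ∀ᶠ t in Filter.atTop, ℓ₂/2 < ‖s t‖ ^ 2 :=
      hNtend.eventually (eventually_gt_nhds (half_lt_self h0))
    obtain ⟨T₀, hT₀⟩ := Filter.eventually_atTop.mp hev
    set T : ℝ := max T₀ 0 with hTdef
    have hT0 : (0:ℝ) ≤ T := le_max_right _ _
    set c : ℝ := μ₁ * (ℓ₂/2) with hcdef
    have hc : 0 < c := by positivity
    set h : ℝ → ℝ := fun t => L t + c * t with hhdef
    have hhanti : AntitoneOn h (Set.Ici T) := by
      apply antitoneOn_of_hasDerivWithinAt_nonpos (convex_Ici T)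
        (f' := fun t => L' t + c)
      · intro t ht
        have : Set.Ici T ⊆ Set.Ici (0:ℝ) := Set.Ici_subset_Ici.mpr hT0
        exact (((hLderiv t (this ht)).mono this).add
          ((hasDerivWithinAt_id t _).const_mul c)).continuousWithinAt
      · intro t ht
        rw [interior_Ici] at ht
        have ht' : t ∈ Set.Ici (0:ℝ) := le_trans hT0 (le_of_lt ht)
        have hsub : Set.Ioi T ⊆ Set.Ici (0:ℝ) :=
          fun x hx => le_trans hT0 (le_of_lt hx)
        have := ((hLderiv t ht').mono hsub).add ((hasDerivWithinAt_id t _).const_mul c)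
        rw [interior_Ici]
        exact this.congr_deriv (by ring)
      · intro t ht
        rw [interior_Ici] at ht
        have ht' : t ∈ Set.Ici (0:ℝ) := le_trans hT0 (le_of_lt ht)
        have h1 : ℓ₂/2 < ‖s t‖ ^ 2 := hT₀ t (le_trans (le_max_left _ _) (le_of_lt ht))
        have h2 : 0 ≤ ∑ i, Λ i * |s t i| :=
          Finset.sum_nonneg fun i _ => mul_nonneg (hΛ i).le (abs_nonneg _)
        simp only [hL'def, hcdef]
        nlinarith
    set t₁ : ℝ := T + (L T + 1)/c with ht₁def
    have hLT : 0 ≤ L T := hLnonneg T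
    have ht₁ : T ≤ t₁ := by
      have h9 : 0 ≤ (L T + 1)/c := by positivity
      rw [ht₁def]
      linarith
    have := hhanti (Set.self_mem_Ici) ht₁ ht₁
    have hct₁ : c * t₁ = c * T + (L T + 1) := by
      rw [ht₁def, mul_add, mul_div_cancel₀ _ hc.ne']
    have hLt₁ : 0 ≤ L t₁ := hLnonneg t₁
    simp only [hhdef] at this
    rw [hct₁] at this
    linarith
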